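/- Let n ≥ 1 and define n×n real matrices D and M indexed by 0 ≤ j, k ≤ n−1 as follows: D is diagonal with D_{jj} = −(j(j+3) + 2); M is symmetric pentadiagonal with M_{j,j} = 2(j+1)(j+2)/((2j+1)(2j+5)), M_{j,j+1} = M_{j+1,j} = 0, M_{j,j+2} = M_{j+2,j} = −(1/((2j+3)(2j+5))) · √((j+1)(j+2)(j+3)(j+4)(2j+3)/(2j+7)), and all other entries zero. Then every eigenvalue μ of A = D^{-1}M is real and satisfies −1 ≤ μ ≤ −1/(30 n⁴). -/

import Mathlib

open Matrix

open Finset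

noncomputable def usAl (j : ℕ) : ℝ :=
  Real.sqrt (((j : ℝ) + 3) * ((j : ℝ) + 4) / ((2 * (j : ℝ) + 3) * (2 * (j : ℝ) + 5)))

noncomputable def usBe (j : ℕ) : ℝ :=
  Real.sqrt (((j : ℝ) + 1) * ((j : ℝ) + 2) / ((2 * (j : ℝ) + 5) * (2 * (j : ℝ) + 7)))

def usD (j : ℕ) : ℝ := ((j : ℝ) + 1) * ((j : ℝ) + 2)

noncomputable def usT (j k : ℕ) : ℝ :=
  if j ≤ k ∧ 2 ∣ (k - j) then
    Real.sqrt (((j : ℝ) + 1) * ((j : ℝ) + 2) * (2 * (j : ℝ) + 3) * (2 * (k : ℝ) + 5) /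
      (((k : ℝ) + 1) * ((k : ℝ) + 2) * ((k : ℝ) + 3) * ((k : ℝ) + 4)))
  else 0

lemma usAl_pos (j : ℕ) : 0 < usAl j := by
  have h : (0:ℝ) ≤ (j:ℝ) := Nat.cast_nonneg j
  apply Real.sqrt_pos.2; positivity

lemma usBe_nonneg (j : ℕ) : 0 ≤ usBe j := Real.sqrt_nonneg _

lemma usAl_sq (j : ℕ) :
    usAl j ^ 2 = ((j : ℝ) + 3) * ((j : ℝ) + 4) / ((2 * (j : ℝ) + 3) * (2 * (j : ℝ) + 5)) := by
  have h : (0:ℝ) ≤ (j:ℝ) := Nat.cast_nonneg j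
  rw [usAl, Real.sq_sqrt (by positivity)]

lemma usBe_sq (j : ℕ) :
    usBe j ^ 2 = ((j : ℝ) + 1) * ((j : ℝ) + 2) / ((2 * (j : ℝ) + 5) * (2 * (j : ℝ) + 7)) := by
  have h : (0:ℝ) ≤ (j:ℝ) := Nat.cast_nonneg j
  rw [usBe, Real.sq_sqrt (by positivity)]

/-- S1: the off-diagonal entry of `M` equals `-(usAl j * usBe j)`. -/
lemma usAl_mul_usBe (j : ℕ) :
    usAl j * usBe j = 1 / ((2 * (j : ℝ) + 3) * (2 * (j : ℝ) + 5)) *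
      Real.sqrt (((j : ℝ) + 1) * ((j : ℝ) + 2) * ((j : ℝ) + 3) * ((j : ℝ) + 4)
        * (2 * (j : ℝ) + 3) / (2 * (j : ℝ) + 7)) := by
  have h : (0:ℝ) ≤ (j:ℝ) := Nat.cast_nonneg j
  rw [usAl, usBe, ← Real.sqrt_mul (by positivity)]
  rw [show 1 / ((2 * (j : ℝ) + 3) * (2 * (j : ℝ) + 5)) =
    Real.sqrt ((1 / ((2 * (j : ℝ) + 3) * (2 * (j : ℝ) + 5)))^2) from
      (Real.sqrt_sq (by positivity)).symm]
  rw [← Real.sqrt_mul (by positivity)]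
  congr 1
  field_simp

lemma usT_nonneg (j k : ℕ) : 0 ≤ usT j k := by
  unfold usT; split
  · exact Real.sqrt_nonneg _
  · exact le_refl 0

lemma usT_diag (j : ℕ) : usT j j = 1 / usAl j := by
  have h : (0:ℝ) ≤ (j:ℝ) := Nat.cast_nonneg j
  rw [usT, if_pos ⟨le_refl j, by simp⟩, usAl, one_div, ← Real.sqrt_inv]
  congr 1
  have d1 : (2 * (j:ℝ) + 3) ≠ 0 := by positivity
  have d2 : (2 * (j:ℝ) + 5) ≠ 0 := by positivity
  have d4 : ((j:ℝ) + 1) ≠ 0 := by positivity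
  have d5 : ((j:ℝ) + 2) ≠ 0 := by positivity
  have d6 : ((j:ℝ) + 3) ≠ 0 := by positivity
  have d7 : ((j:ℝ) + 4) ≠ 0 := by positivity
  field_simp

lemma usT_step {j k : ℕ} (hjk : j ≤ k) (hpar : 2 ∣ (k - j)) (hne : k ≠ j) :
    usT j k = usBe j / usAl j * usT (j + 2) k := by
  have hk2 : j + 2 ≤ k := by omega
  have hpar2 : 2 ∣ (k - (j + 2)) := by omega
  have h : (0:ℝ) ≤ (j:ℝ) := Nat.cast_nonneg j
  have hk : (0:ℝ) ≤ (k:ℝ) := Nat.cast_nonneg k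
  rw [usT, if_pos ⟨hjk, hpar⟩, usT, if_pos ⟨hk2, hpar2⟩, usBe, usAl]
  rw [← Real.sqrt_div (by positivity), ← Real.sqrt_mul (by positivity)]
  congr 1
  have e2 : ((j + 2 : ℕ) : ℝ) = (j:ℝ) + 2 := by push_cast; ring
  rw [e2]
  have d1 : (2 * (j:ℝ) + 3) ≠ 0 := by positivity
  have d2 : (2 * (j:ℝ) + 5) ≠ 0 := by positivity
  have d3 : (2 * (j:ℝ) + 7) ≠ 0 := by positivity
  have d4 : ((j:ℝ) + 3) ≠ 0 := by positivity
  have d5 : ((j:ℝ) + 4) ≠ 0 := by positivity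
  have d6 : ((k:ℝ) + 1) ≠ 0 := by positivity
  have d7 : ((k:ℝ) + 2) ≠ 0 := by positivity
  have d8 : ((k:ℝ) + 3) ≠ 0 := by positivity
  have d9 : ((k:ℝ) + 4) ≠ 0 := by positivity
  field_simp
  ring

lemma usD_mul_usT_sq {j k : ℕ} :
    usD j * usT j k ^ 2 ≤ ((j:ℝ)+1)^2 * ((j:ℝ)+2)^2 * (2*(j:ℝ)+3) * (2*(k:ℝ)+5) /
      (((k : ℝ) + 1) * ((k : ℝ) + 2) * ((k : ℝ) + 3) * ((k : ℝ) + 4)) := by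
  have h : (0:ℝ) ≤ (j:ℝ) := Nat.cast_nonneg j
  have hk : (0:ℝ) ≤ (k:ℝ) := Nat.cast_nonneg k
  unfold usT usD
  split
  · rw [Real.sq_sqrt (by positivity)]
    apply le_of_eq; field_simp
  · simp; positivity

/-- P1 -/
lemma usP1 (k : ℕ) :
    ∑ j ∈ range (k + 1), ((j:ℝ)+1)^2 * ((j:ℝ)+2)^2 * (2*(j:ℝ)+3) ≤ ((k:ℝ)+2)^6 / 3 := by
  induction k with
  | zero => simp; norm_num
  | succ m ih =>
      rw [sum_range_succ]
      have hm : (0:ℝ) ≤ (m:ℝ) := Nat.cast_nonneg m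
      push_cast
      push_cast at ih
      nlinarith [sq_nonneg ((m:ℝ)+2), sq_nonneg ((m:ℝ)), pow_pos (show (0:ℝ) < (m:ℝ)+2 by linarith) 4]

/-- P3 -/
lemma usP3 (n : ℕ) : ∑ k ∈ range n, ((k:ℝ)+2)^3 ≤ 30 * (n:ℝ)^4 := by
  induction n with
  | zero => simp
  | succ m ih =>
      rw [sum_range_succ]
      have hm : (0:ℝ) ≤ (m:ℝ) := Nat.cast_nonneg m
      push_cast
      push_cast at ih
      nlinarith [sq_nonneg ((m:ℝ)), pow_pos (show (0:ℝ) < (m:ℝ)+1 by linarith) 3]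

/-- shift equality -/
lemma sum_shift2_eq (f : ℕ → ℝ) (n : ℕ) (h0 : f 0 = 0) (h1 : f 1 = 0)
    (hn : f n = 0) (hn1 : f (n+1) = 0) :
    ∑ i ∈ range n, f (i + 2) = ∑ i ∈ range n, f i := by
  have e1 : ∑ i ∈ range (n+2), f i = ∑ i ∈ range (n+1), f (i+1) + f 0 := sum_range_succ' f (n+1)
  have e2 : ∑ i ∈ range (n+1), f (i+1) = ∑ i ∈ range n, f (i+2) + f 1 :=
    sum_range_succ' (fun i => f (i+1)) n
  have e3 : ∑ i ∈ range (n+2), f i = ∑ i ∈ range n, f i + f n + f (n+1) := by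
    rw [sum_range_succ, sum_range_succ]
  rw [e2, h0, h1] at e1
  rw [hn, hn1] at e3
  linarith [e1, e3]

noncomputable def usC (j : ℕ) : ℝ :=
  -(1 / ((2 * (j : ℝ) + 3) * (2 * (j : ℝ) + 5))) *
    Real.sqrt (((j : ℝ) + 1) * ((j : ℝ) + 2) * ((j : ℝ) + 3) * ((j : ℝ) + 4)
      * (2 * (j : ℝ) + 3) / (2 * (j : ℝ) + 7))

noncomputable def usA (j : ℕ) : ℝ :=
  2 * ((j : ℝ) + 1) * ((j : ℝ) + 2) / ((2 * (j : ℝ) + 1) * (2 * (j : ℝ) + 5))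

noncomputable def usM (j k : ℕ) : ℝ :=
  if j = k then usA j else if k = j + 2 then usC j else if j = k + 2 then usC k else 0

/-- delta decomposition of `usM` (as summand in `k`). -/
lemma usM_split (j k : ℕ) :
    usM j k = (if k = j then usA j else 0) + (if k = j + 2 then usC j else 0)
      + (if j = k + 2 then usC k else 0) := by
  unfold usM
  by_cases h1 : j = k
  · subst h1
    simp [show ¬(j = j + 2) from by omega, show ¬(j + 2 = j) from by omega]
  · by_cases h2 : k = j + 2
    · subst h2
      simp [h1, show ¬(j = j + 2 + 2) from by omega, Ne.symm h1]
    · by_cases h3 : j = k + 2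
      · subst h3
        simp [h1, h2, show ¬(k = k + 2 + 2) from by omega, Ne.symm h1]
      · simp [h1, h2, h3, show ¬(k = j) from fun h => h1 h.symm]

/-- diagonal identity: `usA k = usAl k ^ 2 + (if 2 ≤ k then usBe (k-2) ^2 else 0)` -/
lemma usA_eq (k : ℕ) :
    usA k = usAl k ^ 2 + (if 2 ≤ k then usBe (k - 2) ^ 2 else 0) := by
  rcases Nat.lt_or_ge k 2 with hk | hk
  · interval_cases k
    · rw [usA, usAl_sq]; norm_num
    · rw [usA, usAl_sq]; norm_num
  · obtain ⟨m, rfl⟩ : ∃ m, k = m + 2 := ⟨k - 2, by omega⟩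
    rw [if_pos (show 2 ≤ m + 2 by omega), show m + 2 - 2 = m from rfl, usA, usAl_sq, usBe_sq]
    have hm : (0:ℝ) ≤ (m:ℝ) := Nat.cast_nonneg m
    push_cast
    have d1 : (2 * (m:ℝ) + 5) ≠ 0 := by positivity
    have d2 : (2 * (m:ℝ) + 7) ≠ 0 := by positivity
    have d3 : (2 * (m:ℝ) + 9) ≠ 0 := by positivity
    have d4 : (2 * (m:ℝ) + 11) ≠ 0 := by positivity
    field_simp
    ring

/-- P4 : `2 * usA k ≤ usD k` -/
lemma usA_le (k : ℕ) : 2 * usA k ≤ usD k := by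
  have hm : (0:ℝ) ≤ (k:ℝ) := Nat.cast_nonneg k
  rw [usA, usD, mul_div_assoc']
  rw [div_le_iff₀ (by positivity)]
  have h5 : (4:ℝ) ≤ (2*(k:ℝ)+1)*(2*(k:ℝ)+5) := by nlinarith
  have hpos : (0:ℝ) ≤ ((k:ℝ)+1)*((k:ℝ)+2) := by positivity
  nlinarith [mul_le_mul_of_nonneg_left h5 hpos]

/-- P2 combined division bound -/
lemma usP2 (k : ℕ) :
    ((k:ℝ)+2)^6 / 3 * ((2*(k:ℝ)+5) / (((k:ℝ)+1) * ((k:ℝ)+2) * ((k:ℝ)+3) * ((k:ℝ)+4)))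
      ≤ ((k:ℝ)+2)^3 := by
  have hm : (0:ℝ) ≤ (k:ℝ) := Nat.cast_nonneg k
  rw [div_mul_div_comm, div_le_iff₀ (by positivity)]
  have key : ((k:ℝ)+2)^2*(2*(k:ℝ)+5) ≤ 3*((k:ℝ)+1)*((k:ℝ)+3)*((k:ℝ)+4) := by nlinarith
  have h4 : (0:ℝ) ≤ ((k:ℝ)+2)^4 := by positivity
  nlinarith [mul_le_mul_of_nonneg_left key h4]

lemma usC_eq (j : ℕ) : usC j = -(usAl j * usBe j) := by
  rw [usC, usAl_mul_usBe]; ring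

/-- Claim A -/
lemma us_quad_eq (n : ℕ) (U : ℕ → ℝ) (hU : ∀ k, n ≤ k → U k = 0) :
    ∑ j ∈ range n, ∑ k ∈ range n, U j * usM j k * U k
      = ∑ i ∈ range n, (usAl i * U i - usBe i * U (i + 2)) ^ 2 := by
  have hUn : ∀ k, ¬ (k ∈ range n) → U k = 0 := fun k hk => hU k (by simpa using hk)
  have step1 : ∀ j ∈ range n, ∑ k ∈ range n, U j * usM j k * U k
      = usA j * U j ^ 2 + usC j * (U j * U (j + 2))
        + ∑ k ∈ range n, (if j = k + 2 then U j * usC k * U k else 0) := by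
    intro j hj
    have e0 : ∀ k ∈ range n, U j * usM j k * U k
        = (if k = j then U j * usA j * U k else 0) + (if k = j + 2 then U j * usC j * U k else 0)
          + (if j = k + 2 then U j * usC k * U k else 0) := by
      intro k _
      rw [usM_split, mul_add, mul_add, add_mul, add_mul]
      simp only [mul_ite, ite_mul, mul_zero, zero_mul]
    rw [sum_congr rfl e0, sum_add_distrib, sum_add_distrib,
      Finset.sum_ite_eq' (range n) j (fun k => U j * usA j * U k),
      Finset.sum_ite_eq' (range n) (j + 2) (fun k => U j * usC j * U k), if_pos hj]
    congr 2
    · ring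
    · split
      · ring
      · rename_i h; rw [hUn (j + 2) h]; ring
  have swap : ∑ j ∈ range n, ∑ k ∈ range n, (if j = k + 2 then U j * usC k * U k else 0)
      = ∑ k ∈ range n, usC k * (U k * U (k + 2)) := by
    rw [Finset.sum_comm]
    refine sum_congr rfl fun k _ => ?_
    rw [Finset.sum_ite_eq' (range n) (k + 2) (fun j => U j * usC k * U k)]
    split
    · ring
    · rename_i h; rw [hUn (k + 2) h]; ring
  calc ∑ j ∈ range n, ∑ k ∈ range n, U j * usM j k * U k
      = ∑ j ∈ range n, (usA j * U j ^ 2 + usC j * (U j * U (j + 2)))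
        + ∑ j ∈ range n, ∑ k ∈ range n, (if j = k + 2 then U j * usC k * U k else 0) := by
        rw [sum_congr rfl step1, sum_add_distrib]
    _ = ∑ j ∈ range n, (usA j * U j ^ 2 + 2 * usC j * (U j * U (j + 2))) := by
        rw [swap, ← sum_add_distrib]; refine sum_congr rfl fun j _ => ?_; ring
    _ = ∑ j ∈ range n, ((usAl j ^ 2 + (if 2 ≤ j then usBe (j - 2) ^ 2 else 0)) * U j ^ 2
          + 2 * usC j * (U j * U (j + 2))) := by
        refine sum_congr rfl fun j _ => ?_; rw [usA_eq]
    _ = ∑ i ∈ range n, (usAl i * U i - usBe i * U (i + 2)) ^ 2 := by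
        have f0 : (if 2 ≤ 0 then usBe (0 - 2) ^ 2 else 0) * U 0 ^ 2 = 0 := by norm_num
        have f1 : (if 2 ≤ 1 then usBe (1 - 2) ^ 2 else 0) * U 1 ^ 2 = 0 := by norm_num
        have fn : (if 2 ≤ n then usBe (n - 2) ^ 2 else 0) * U n ^ 2 = 0 := by
          rw [hU n (le_refl n)]; ring
        have fn1 : (if 2 ≤ n + 1 then usBe (n + 1 - 2) ^ 2 else 0) * U (n + 1) ^ 2 = 0 := by
          rw [hU (n + 1) (by omega)]; ring
        have hshift : ∑ i ∈ range n, (if 2 ≤ i then usBe (i - 2) ^ 2 else 0) * U i ^ 2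
            = ∑ i ∈ range n, usBe i ^ 2 * U (i + 2) ^ 2 := by
          rw [← sum_shift2_eq (fun t => (if 2 ≤ t then usBe (t - 2) ^ 2 else 0) * U t ^ 2) n
            f0 f1 fn fn1]
          refine sum_congr rfl fun i _ => ?_
          show (if 2 ≤ i + 2 then usBe (i + 2 - 2) ^ 2 else 0) * U (i + 2) ^ 2
            = usBe i ^ 2 * U (i + 2) ^ 2
          rw [if_pos (by omega : 2 ≤ i + 2), show i + 2 - 2 = i from rfl]
        have expand : ∀ j ∈ range n,
            ((usAl j ^ 2 + (if 2 ≤ j then usBe (j - 2) ^ 2 else 0)) * U j ^ 2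
              + 2 * usC j * (U j * U (j + 2)))
            = usAl j ^ 2 * U j ^ 2 + (if 2 ≤ j then usBe (j - 2) ^ 2 else 0) * U j ^ 2
              + 2 * usC j * (U j * U (j + 2)) := fun j _ => by ring
        rw [sum_congr rfl expand, sum_add_distrib, sum_add_distrib, hshift,
          ← sum_add_distrib, ← sum_add_distrib]
        refine sum_congr rfl fun i _ => ?_
        rw [usC_eq]; ring

/-- Claim B: back-substitution. -/
lemma us_backsub (n : ℕ) (U : ℕ → ℝ) (hU : ∀ k, n ≤ k → U k = 0) :
    ∀ m j, n ≤ j + m →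
      U j = ∑ k ∈ range n, usT j k * (usAl k * U k - usBe k * U (k + 2)) := by
  intro m
  induction m with
  | zero =>
      intro j hj
      rw [hU j (by omega)]
      rw [eq_comm]
      apply Finset.sum_eq_zero
      intro k hk
      have hkn : k < n := mem_range.1 hk
      have : ¬ (j ≤ k ∧ 2 ∣ (k - j)) := fun h => by omega
      rw [usT, if_neg this, zero_mul]
  | succ m ih =>
      intro j hj
      by_cases hjn : n ≤ j
      · rw [hU j hjn, eq_comm]
        apply Finset.sum_eq_zero
        intro k hk
        have hkn : k < n := mem_range.1 hk
        have : ¬ (j ≤ k ∧ 2 ∣ (k - j)) := fun h => by omega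
        rw [usT, if_neg this, zero_mul]
      · have hal : usAl j ≠ 0 := ne_of_gt (usAl_pos j)
        have hU2 : U (j + 2) = ∑ k ∈ range n, usT (j + 2) k * (usAl k * U k - usBe k * U (k + 2)) :=
          ih (j + 2) (by omega)
        have hW : usAl j * U j - usBe j * U (j + 2)
            = usAl j * U j - usBe j * U (j + 2) := rfl
        -- pointwise identity for the T entries
        have hpt : ∀ k ∈ range n, usT j k * (usAl k * U k - usBe k * U (k + 2))
            = (if k = j then (1 / usAl j) * (usAl k * U k - usBe k * U (k + 2)) else 0)
              + (usBe j / usAl j) * (usT (j + 2) k * (usAl k * U k - usBe k * U (k + 2))) := by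
          intro k _
          rcases eq_or_ne k j with rfl | hne
          · rw [if_pos rfl, usT_diag]
            have : usT (k + 2) k = 0 := by
              rw [usT, if_neg (fun h => by omega)]
            rw [this]
            ring
          · rw [if_neg hne]
            by_cases hcond : j ≤ k ∧ 2 ∣ (k - j)
            · rw [usT_step hcond.1 hcond.2 hne]
              ring
            · have h1 : usT j k = 0 := by rw [usT, if_neg hcond]
              have h2 : usT (j + 2) k = 0 := by
                rw [usT, if_neg (fun h => by
                  exact hcond ⟨by omega, by omega⟩)]
              rw [h1, h2]
              ring
        rw [sum_congr rfl hpt, sum_add_distrib,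
          Finset.sum_ite_eq' (range n) j
            (fun k => (1 / usAl j) * (usAl k * U k - usBe k * U (k + 2))),
          if_pos (mem_range.2 (by omega)), ← Finset.mul_sum, ← hU2]
        field_simp
        ring

/-- upper quadratic bound (Claim L) -/
lemma us_upper (n : ℕ) (U : ℕ → ℝ) (hU : ∀ k, n ≤ k → U k = 0) :
    ∑ i ∈ range n, (usAl i * U i - usBe i * U (i + 2)) ^ 2
      ≤ ∑ j ∈ range n, usD j * U j ^ 2 := by
  have step : ∀ i ∈ range n, (usAl i * U i - usBe i * U (i + 2)) ^ 2
      ≤ 2 * usAl i ^ 2 * U i ^ 2 + 2 * usBe i ^ 2 * U (i + 2) ^ 2 := by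
    intro i _
    nlinarith [sq_nonneg (usAl i * U i + usBe i * U (i + 2))]
  calc ∑ i ∈ range n, (usAl i * U i - usBe i * U (i + 2)) ^ 2
      ≤ ∑ i ∈ range n, (2 * usAl i ^ 2 * U i ^ 2 + 2 * usBe i ^ 2 * U (i + 2) ^ 2) :=
        Finset.sum_le_sum step
    _ = ∑ i ∈ range n, 2 * usAl i ^ 2 * U i ^ 2
        + ∑ i ∈ range n, 2 * usBe i ^ 2 * U (i + 2) ^ 2 := sum_add_distrib
    _ ≤ ∑ j ∈ range n, usD j * U j ^ 2 := by
        have f0 : (if 2 ≤ 0 then 2 * usBe (0 - 2) ^ 2 else 0) * U 0 ^ 2 = 0 := by norm_num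
        have f1 : (if 2 ≤ 1 then 2 * usBe (1 - 2) ^ 2 else 0) * U 1 ^ 2 = 0 := by norm_num
        have fn : (if 2 ≤ n then 2 * usBe (n - 2) ^ 2 else 0) * U n ^ 2 = 0 := by
          rw [hU n (le_refl n)]; ring
        have fn1 : (if 2 ≤ n + 1 then 2 * usBe (n + 1 - 2) ^ 2 else 0) * U (n + 1) ^ 2 = 0 := by
          rw [hU (n + 1) (by omega)]; ring
        have hshift : ∑ i ∈ range n, 2 * usBe i ^ 2 * U (i + 2) ^ 2
            = ∑ i ∈ range n, (if 2 ≤ i then 2 * usBe (i - 2) ^ 2 else 0) * U i ^ 2 := by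
          rw [← sum_shift2_eq (fun t => (if 2 ≤ t then 2 * usBe (t - 2) ^ 2 else 0) * U t ^ 2) n
            f0 f1 fn fn1]
          refine sum_congr rfl fun i _ => ?_
          show 2 * usBe i ^ 2 * U (i + 2) ^ 2
            = (if 2 ≤ i + 2 then 2 * usBe (i + 2 - 2) ^ 2 else 0) * U (i + 2) ^ 2
          rw [if_pos (by omega : 2 ≤ i + 2), show i + 2 - 2 = i from rfl]
        rw [hshift, ← sum_add_distrib]
        apply Finset.sum_le_sum
        intro j _
        have h2a := usA_le j
        have hAeq := usA_eq j
        have := sq_nonneg (U j)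
        split
        · rename_i hj2
          rw [if_pos hj2] at hAeq
          nlinarith [sq_nonneg (U j)]
        · rename_i hj2
          rw [if_neg hj2] at hAeq
          nlinarith [sq_nonneg (U j)]

/-- lower quadratic bound (Claim U) -/
lemma us_lower (n : ℕ) (U : ℕ → ℝ) (hU : ∀ k, n ≤ k → U k = 0) :
    ∑ j ∈ range n, usD j * U j ^ 2
      ≤ 30 * (n:ℝ)^4 * ∑ k ∈ range n, (usAl k * U k - usBe k * U (k + 2)) ^ 2 := by
  set W : ℕ → ℝ := fun k => usAl k * U k - usBe k * U (k + 2) with hWdef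
  have hSW : 0 ≤ ∑ k ∈ range n, W k ^ 2 := Finset.sum_nonneg fun k _ => sq_nonneg _
  have husD : ∀ j : ℕ, 0 ≤ usD j := fun j => by
    unfold usD
    have : (0:ℝ) ≤ (j:ℝ) := Nat.cast_nonneg j
    positivity
  have step1 : ∀ j ∈ range n, usD j * U j ^ 2
      ≤ (usD j * ∑ k ∈ range n, usT j k ^ 2) * ∑ k ∈ range n, W k ^ 2 := by
    intro j _
    have hb := us_backsub n U hU n j (by omega)
    have hcs := Finset.sum_mul_sq_le_sq_mul_sq (range n) (fun k => usT j k) W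
    calc usD j * U j ^ 2 = usD j * (∑ k ∈ range n, usT j k * W k) ^ 2 := by rw [← hb]
      _ ≤ usD j * ((∑ k ∈ range n, usT j k ^ 2) * ∑ k ∈ range n, W k ^ 2) :=
          mul_le_mul_of_nonneg_left hcs (husD j)
      _ = (usD j * ∑ k ∈ range n, usT j k ^ 2) * ∑ k ∈ range n, W k ^ 2 := by ring
  have frob : ∑ j ∈ range n, ∑ k ∈ range n, usD j * usT j k ^ 2 ≤ 30 * (n:ℝ)^4 := by
    rw [Finset.sum_comm]
    calc ∑ k ∈ range n, ∑ j ∈ range n, usD j * usT j k ^ 2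
        ≤ ∑ k ∈ range n, ((k:ℝ)+2)^3 := by
          apply Finset.sum_le_sum
          intro k hk
          have hkn : k < n := mem_range.1 hk
          have hsub : ∑ j ∈ range n, usD j * usT j k ^ 2
              = ∑ j ∈ range (k+1), usD j * usT j k ^ 2 := by
            rw [eq_comm]
            apply Finset.sum_subset (by rw [Finset.range_subset_range]; omega)
            intro j hjn hjk1
            have hkj : k < j := by
              have := mem_range.1 hjn
              have : ¬ j < k + 1 := fun h => hjk1 (mem_range.2 h)
              omega
            rw [usT, if_neg (fun h => by omega)]
            ring
          rw [hsub]
          have hden : (0:ℝ) < ((k:ℝ)+1)*((k:ℝ)+2)*((k:ℝ)+3)*((k:ℝ)+4) := by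
            have : (0:ℝ) ≤ (k:ℝ) := Nat.cast_nonneg k
            positivity
          calc ∑ j ∈ range (k+1), usD j * usT j k ^ 2
              ≤ ∑ j ∈ range (k+1), ((j:ℝ)+1)^2*((j:ℝ)+2)^2*(2*(j:ℝ)+3)
                  * ((2*(k:ℝ)+5) / (((k:ℝ)+1)*((k:ℝ)+2)*((k:ℝ)+3)*((k:ℝ)+4))) := by
                apply Finset.sum_le_sum
                intro j _
                refine le_trans usD_mul_usT_sq (le_of_eq ?_)
                rw [mul_div_assoc]
            _ = (∑ j ∈ range (k+1), ((j:ℝ)+1)^2*((j:ℝ)+2)^2*(2*(j:ℝ)+3))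
                  * ((2*(k:ℝ)+5) / (((k:ℝ)+1)*((k:ℝ)+2)*((k:ℝ)+3)*((k:ℝ)+4))) := by
                rw [Finset.sum_mul]
            _ ≤ ((k:ℝ)+2)^6/3
                  * ((2*(k:ℝ)+5) / (((k:ℝ)+1)*((k:ℝ)+2)*((k:ℝ)+3)*((k:ℝ)+4))) := by
                apply mul_le_mul_of_nonneg_right (usP1 k)
                have : (0:ℝ) ≤ (k:ℝ) := Nat.cast_nonneg k
                positivity
            _ ≤ ((k:ℝ)+2)^3 := usP2 k
      _ ≤ 30 * (n:ℝ)^4 := usP3 n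
  calc ∑ j ∈ range n, usD j * U j ^ 2
      ≤ ∑ j ∈ range n, (usD j * ∑ k ∈ range n, usT j k ^ 2) * ∑ k ∈ range n, W k ^ 2 :=
        Finset.sum_le_sum step1
    _ = (∑ j ∈ range n, ∑ k ∈ range n, usD j * usT j k ^ 2) * ∑ k ∈ range n, W k ^ 2 := by
        rw [← Finset.sum_mul]
        congr 1
        exact sum_congr rfl fun j _ => by rw [Finset.mul_sum]
    _ ≤ 30 * (n:ℝ)^4 * ∑ k ∈ range n, W k ^ 2 := mul_le_mul_of_nonneg_right frob hSW

lemma usD_pos (j : ℕ) : 0 < usD j := by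
  unfold usD
  have : (0:ℝ) ≤ (j:ℝ) := Nat.cast_nonneg j
  positivity

lemma usM_symm (j k : ℕ) : usM j k = usM k j := by
  unfold usM
  by_cases h1 : j = k
  · subst h1; rfl
  · by_cases h2 : k = j + 2
    · subst h2
      simp [h1, show ¬(j + 2 = j) from by omega, show ¬(j = j + 2 + 2) from by omega]
    · by_cases h3 : j = k + 2
      · subst h3
        simp [h1, h2, show ¬(k = k + 2) from by omega, show ¬(k = k + 2 + 2) from by omega]
      · simp [h1, h2, h3, show ¬(k = j) from fun h => h1 h.symm]

/-- Eigenvalue bounds for the ultraspherical spectral discretization matrix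
`A = D⁻¹ M` on the square: `D` is diagonal with `D_{jj} = −(j(j+3) + 2)` and `M` is
the symmetric pentadiagonal multiplication matrix for `1 − x²` in the normalized
ultraspherical basis (indices `0 ≤ j, k ≤ n−1`).  Every eigenvalue `μ` of `A` is
real and satisfies `−1 ≤ μ ≤ −1/(30 n⁴)`. -/
theorem ultraspherical_discretization_eigenvalue_bounds (n : ℕ) (hn : 1 ≤ n)
    (D M : Matrix (Fin n) (Fin n) ℝ)
    (hD : ∀ j k : Fin n, D j k =
      if j = k then -((j : ℝ) * ((j : ℝ) + 3) + 2) else 0)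
    (hM : ∀ j k : Fin n, M j k =
      if j = k then 2 * ((j : ℝ) + 1) * ((j : ℝ) + 2) / ((2 * (j : ℝ) + 1) * (2 * (j : ℝ) + 5))
      else if (k : ℕ) = (j : ℕ) + 2 then
        -(1 / ((2 * (j : ℝ) + 3) * (2 * (j : ℝ) + 5))) *
          Real.sqrt (((j : ℝ) + 1) * ((j : ℝ) + 2) * ((j : ℝ) + 3) * ((j : ℝ) + 4)
            * (2 * (j : ℝ) + 3) / (2 * (j : ℝ) + 7))
      else if (j : ℕ) = (k : ℕ) + 2 then
        -(1 / ((2 * (k : ℝ) + 3) * (2 * (k : ℝ) + 5))) *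
          Real.sqrt (((k : ℝ) + 1) * ((k : ℝ) + 2) * ((k : ℝ) + 3) * ((k : ℝ) + 4)
            * (2 * (k : ℝ) + 3) / (2 * (k : ℝ) + 7))
      else 0) :
    ∀ μ ∈ spectrum ℂ ((D⁻¹ * M).map (Complex.ofReal ·)),
      μ.im = 0 ∧ -1 ≤ μ.re ∧ μ.re ≤ -1 / (30 * (n : ℝ) ^ 4) := by
  intro μ hμ
  -- identify M with usM
  have hMus : ∀ j k : Fin n, M j k = usM (j : ℕ) (k : ℕ) := by
    intro j k
    rw [hM j k, usM]
    by_cases h : (j : ℕ) = (k : ℕ)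
    · rw [if_pos (Fin.ext h), if_pos h, usA]
    · rw [if_neg (fun hh => h (by rw [hh])), if_neg h]
      rfl
  -- D is diagonal
  have hDdiag : D = Matrix.diagonal (fun j : Fin n => -usD (j : ℕ)) := by
    ext j k
    rw [hD j k]
    by_cases h : j = k
    · subst h; rw [if_pos rfl, Matrix.diagonal_apply_eq]; unfold usD; ring
    · rw [if_neg h, Matrix.diagonal_apply_ne _ h]
  have hDinv : D⁻¹ = Matrix.diagonal (fun j : Fin n => (-usD (j : ℕ))⁻¹) := by
    apply Matrix.inv_eq_left_inv
    have hfun : (fun j : Fin n => (-usD (j : ℕ))⁻¹ * -usD (j : ℕ)) = fun _ => (1:ℝ) :=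
      funext fun j => inv_mul_cancel₀ (neg_ne_zero.2 (ne_of_gt (usD_pos (j : ℕ))))
    rw [hDdiag, Matrix.diagonal_mul_diagonal, hfun, Matrix.diagonal_one]
  -- extract an eigenvector
  have hnu : ¬ IsUnit ((algebraMap ℂ (Matrix (Fin n) (Fin n) ℂ)) μ
      - (D⁻¹ * M).map (Complex.ofReal ·)) := hμ
  have hdet : ((algebraMap ℂ (Matrix (Fin n) (Fin n) ℂ)) μ
      - (D⁻¹ * M).map (Complex.ofReal ·)).det = 0 := by
    by_contra hne
    exact hnu ((Matrix.isUnit_iff_isUnit_det _).2 (isUnit_iff_ne_zero.2 hne))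
  obtain ⟨v, hveq, hvne⟩ := (Matrix.exists_mulVec_eq_zero_iff).2 hdet
  have heigvec : ((D⁻¹ * M).map (Complex.ofReal ·)).mulVec v = μ • v := by
    have h1 : ((algebraMap ℂ (Matrix (Fin n) (Fin n) ℂ)) μ
        - (D⁻¹ * M).map (Complex.ofReal ·)).mulVec v
        = μ • v - ((D⁻¹ * M).map (Complex.ofReal ·)).mulVec v := by
      rw [Matrix.sub_mulVec]
      congr 1
      rw [Algebra.algebraMap_eq_smul_one, Matrix.smul_mulVec, Matrix.one_mulVec]
    rw [h1] at hvne
    exact (sub_eq_zero.mp hvne).symm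
  -- componentwise eigen-equation in terms of M
  have hA'entry : ∀ j k : Fin n, (D⁻¹ * M) j k = (-usD (j : ℕ))⁻¹ * M j k := by
    intro j k
    rw [hDinv, Matrix.diagonal_mul]
  have heig : ∀ j : Fin n,
      ((((-usD (j : ℕ))⁻¹ : ℝ) : ℂ) * ∑ k : Fin n, ((M j k : ℝ) : ℂ) * v k) = μ * v j := by
    intro j
    have h0 := congrFun heigvec j
    simp only [Matrix.mulVec, dotProduct, Matrix.map_apply, hA'entry,
      Pi.smul_apply, smul_eq_mul] at h0
    rw [← h0, Finset.mul_sum]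
    refine Finset.sum_congr rfl fun k _ => ?_
    push_cast
    ring
  have hcomp : ∀ j : Fin n, (∑ k : Fin n, ((M j k : ℝ) : ℂ) * v k)
      = μ * (((-usD (j : ℕ) : ℝ) : ℂ) * v j) := by
    intro j
    have hne : ((-usD (j : ℕ) : ℝ) : ℂ) ≠ 0 := by
      simp only [ne_eq, Complex.ofReal_eq_zero]
      exact neg_ne_zero.2 (ne_of_gt (usD_pos (j : ℕ)))
    have key : ((-usD (j : ℕ) : ℝ) : ℂ) * (((-usD (j : ℕ))⁻¹ : ℝ) : ℂ) = 1 := by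
      rw [← Complex.ofReal_mul, mul_inv_cancel₀ (neg_ne_zero.2 (ne_of_gt (usD_pos (j : ℕ))))]
      simp
    have h2 := congrArg (fun z => ((-usD (j : ℕ) : ℝ) : ℂ) * z) (heig j)
    rw [← mul_assoc, key, one_mul] at h2
    rw [h2]
    ring
  -- real and imaginary parts
  have hre : ∀ j : Fin n, (∑ k : Fin n, M j k * (v k).re)
      = -(μ.re * (usD (j : ℕ) * (v j).re)) + μ.im * (usD (j : ℕ) * (v j).im) := by
    intro j
    have h := congrArg Complex.re (hcomp j)
    simp only [Complex.re_sum, Complex.mul_re, Complex.mul_im, Complex.ofReal_re,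
      Complex.ofReal_im, Complex.neg_re, Complex.neg_im, Complex.ofReal_neg,
      zero_mul, mul_zero, neg_zero, sub_zero, add_zero, neg_neg] at h
    linear_combination h
  have him : ∀ j : Fin n, (∑ k : Fin n, M j k * (v k).im)
      = -(μ.re * (usD (j : ℕ) * (v j).im)) - μ.im * (usD (j : ℕ) * (v j).re) := by
    intro j
    have h := congrArg Complex.im (hcomp j)
    simp only [Complex.im_sum, Complex.mul_re, Complex.mul_im, Complex.ofReal_re,
      Complex.ofReal_im, Complex.neg_re, Complex.neg_im, Complex.ofReal_neg,
      zero_mul, mul_zero, neg_zero, sub_zero, add_zero, zero_add, neg_neg] at h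
    linear_combination h
  classical
  -- extension of Fin-vectors to ℕ
  have hext0 : ∀ (u : Fin n → ℝ) (t : ℕ), n ≤ t →
      (fun t => if h : t < n then u ⟨t, h⟩ else 0) t = 0 := by
    intro u t ht
    exact dif_neg (by omega)
  have hextlt : ∀ (u : Fin n → ℝ) (k : Fin n),
      (fun t => if h : t < n then u ⟨t, h⟩ else 0) (k : ℕ) = u k := by
    intro u k
    simp
  have convQ : ∀ u : Fin n → ℝ, (∑ j : Fin n, ∑ k : Fin n, u j * M j k * u k)
      = ∑ j ∈ range n, ∑ k ∈ range n,
          (fun t => if h : t < n then u ⟨t, h⟩ else 0) j * usM j k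
            * (fun t => if h : t < n then u ⟨t, h⟩ else 0) k := by
    intro u
    rw [← Fin.sum_univ_eq_sum_range (fun a => ∑ k ∈ range n,
      (fun t => if h : t < n then u ⟨t, h⟩ else 0) a * usM a k
        * (fun t => if h : t < n then u ⟨t, h⟩ else 0) k) n]
    refine Finset.sum_congr rfl fun j _ => ?_
    rw [← Fin.sum_univ_eq_sum_range (fun b =>
      (fun t => if h : t < n then u ⟨t, h⟩ else 0) (j : ℕ) * usM (j : ℕ) b
        * (fun t => if h : t < n then u ⟨t, h⟩ else 0) b) n]
    refine Finset.sum_congr rfl fun k _ => ?_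
    rw [hextlt, hextlt, hMus]
  have convS : ∀ u : Fin n → ℝ, (∑ j : Fin n, usD (j : ℕ) * u j ^ 2)
      = ∑ j ∈ range n, usD j * (fun t => if h : t < n then u ⟨t, h⟩ else 0) j ^ 2 := by
    intro u
    rw [← Fin.sum_univ_eq_sum_range (fun a =>
      usD a * (fun t => if h : t < n then u ⟨t, h⟩ else 0) a ^ 2) n]
    exact Finset.sum_congr rfl fun j _ => by rw [hextlt]
  have quadBounds : ∀ u : Fin n → ℝ,
      (∑ j : Fin n, ∑ k : Fin n, u j * M j k * u k) ≤ (∑ j : Fin n, usD (j : ℕ) * u j ^ 2)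
      ∧ (∑ j : Fin n, usD (j : ℕ) * u j ^ 2)
          ≤ 30 * (n:ℝ)^4 * ∑ j : Fin n, ∑ k : Fin n, u j * M j k * u k := by
    intro u
    have h1 := us_quad_eq n (fun t => if h : t < n then u ⟨t, h⟩ else 0) (hext0 u)
    have h2 := us_upper n (fun t => if h : t < n then u ⟨t, h⟩ else 0) (hext0 u)
    have h3 := us_lower n (fun t => if h : t < n then u ⟨t, h⟩ else 0) (hext0 u)
    rw [convQ u, convS u, h1]
    exact ⟨h2, h3⟩
  -- scalar quantities
  set Sx := ∑ j : Fin n, usD (j : ℕ) * (v j).re ^ 2 with hSxdef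
  set Sy := ∑ j : Fin n, usD (j : ℕ) * (v j).im ^ 2 with hSydef
  set P := ∑ j : Fin n, usD (j : ℕ) * ((v j).re * (v j).im) with hPdef
  have hQx : (∑ j : Fin n, ∑ k : Fin n, (v j).re * M j k * (v k).re)
      = -μ.re * Sx + μ.im * P := by
    calc ∑ j : Fin n, ∑ k : Fin n, (v j).re * M j k * (v k).re
        = ∑ j : Fin n, (v j).re * (∑ k : Fin n, M j k * (v k).re) := by
          refine Finset.sum_congr rfl fun j _ => ?_
          rw [Finset.mul_sum]
          exact Finset.sum_congr rfl fun k _ => by ring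
      _ = ∑ j : Fin n, ((-μ.re) * (usD (j : ℕ) * (v j).re ^ 2)
            + μ.im * (usD (j : ℕ) * ((v j).re * (v j).im))) := by
          refine Finset.sum_congr rfl fun j _ => ?_
          rw [hre j]; ring
      _ = -μ.re * Sx + μ.im * P := by
          rw [Finset.sum_add_distrib, hSxdef, hPdef, ← Finset.mul_sum, ← Finset.mul_sum]
  have hQy : (∑ j : Fin n, ∑ k : Fin n, (v j).im * M j k * (v k).im)
      = -μ.re * Sy - μ.im * P := by
    calc ∑ j : Fin n, ∑ k : Fin n, (v j).im * M j k * (v k).im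
        = ∑ j : Fin n, (v j).im * (∑ k : Fin n, M j k * (v k).im) := by
          refine Finset.sum_congr rfl fun j _ => ?_
          rw [Finset.mul_sum]
          exact Finset.sum_congr rfl fun k _ => by ring
      _ = ∑ j : Fin n, ((-μ.re) * (usD (j : ℕ) * (v j).im ^ 2)
            + (-μ.im) * (usD (j : ℕ) * ((v j).re * (v j).im))) := by
          refine Finset.sum_congr rfl fun j _ => ?_
          rw [him j]; ring
      _ = -μ.re * Sy - μ.im * P := by
          rw [Finset.sum_add_distrib, hSydef, hPdef, ← Finset.mul_sum, ← Finset.mul_sum]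
          ring
  have hCxy : (∑ j : Fin n, ∑ k : Fin n, (v j).re * M j k * (v k).im)
      = -μ.re * P - μ.im * Sx := by
    calc ∑ j : Fin n, ∑ k : Fin n, (v j).re * M j k * (v k).im
        = ∑ j : Fin n, (v j).re * (∑ k : Fin n, M j k * (v k).im) := by
          refine Finset.sum_congr rfl fun j _ => ?_
          rw [Finset.mul_sum]
          exact Finset.sum_congr rfl fun k _ => by ring
      _ = ∑ j : Fin n, ((-μ.re) * (usD (j : ℕ) * ((v j).re * (v j).im))
            + (-μ.im) * (usD (j : ℕ) * (v j).re ^ 2)) := by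
          refine Finset.sum_congr rfl fun j _ => ?_
          rw [him j]; ring
      _ = -μ.re * P - μ.im * Sx := by
          rw [Finset.sum_add_distrib, hSxdef, hPdef, ← Finset.mul_sum, ← Finset.mul_sum]
          ring
  have hCyx : (∑ j : Fin n, ∑ k : Fin n, (v j).im * M j k * (v k).re)
      = -μ.re * P + μ.im * Sy := by
    calc ∑ j : Fin n, ∑ k : Fin n, (v j).im * M j k * (v k).re
        = ∑ j : Fin n, (v j).im * (∑ k : Fin n, M j k * (v k).re) := by
          refine Finset.sum_congr rfl fun j _ => ?_
          rw [Finset.mul_sum]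
          exact Finset.sum_congr rfl fun k _ => by ring
      _ = ∑ j : Fin n, ((-μ.re) * (usD (j : ℕ) * ((v j).re * (v j).im))
            + μ.im * (usD (j : ℕ) * (v j).im ^ 2)) := by
          refine Finset.sum_congr rfl fun j _ => ?_
          rw [hre j]; ring
      _ = -μ.re * P + μ.im * Sy := by
          rw [Finset.sum_add_distrib, hSydef, hPdef, ← Finset.mul_sum, ← Finset.mul_sum]
  have hswap : (∑ j : Fin n, ∑ k : Fin n, (v j).re * M j k * (v k).im)
      = ∑ j : Fin n, ∑ k : Fin n, (v j).im * M j k * (v k).re := by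
    rw [Finset.sum_comm]
    refine Finset.sum_congr rfl fun k _ => Finset.sum_congr rfl fun j _ => ?_
    rw [hMus j k, hMus k j, usM_symm]
    ring
  -- positivity of S
  have hSpos : 0 < Sx + Sy := by
    obtain ⟨j0, hj0⟩ := Function.ne_iff.mp hveq
    rw [hSxdef, hSydef, ← Finset.sum_add_distrib]
    apply Finset.sum_pos'
    · intro j _
      have := usD_pos (j : ℕ)
      positivity
    · refine ⟨j0, Finset.mem_univ j0, ?_⟩
      have h2 : 0 < (v j0).re ^ 2 + (v j0).im ^ 2 := by
        rcases (show (v j0).re ≠ 0 ∨ (v j0).im ≠ 0 by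
          by_contra hc
          push_neg at hc
          exact hj0 (Complex.ext hc.1 hc.2)) with hr | hi
        · nlinarith [mul_self_pos.mpr hr, sq_nonneg ((v j0).im)]
        · nlinarith [mul_self_pos.mpr hi, sq_nonneg ((v j0).re)]
      have h3 := usD_pos (j0 : ℕ)
      nlinarith [mul_pos h3 h2]
  -- imaginary part vanishes
  have hμim : μ.im = 0 := by
    have heq : -μ.re * P - μ.im * Sx = -μ.re * P + μ.im * Sy := by
      rw [← hCxy, hswap, hCyx]
    have hz : μ.im * (Sx + Sy) = 0 := by linarith
    rcases mul_eq_zero.mp hz with h | h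
    · exact h
    · exact absurd h (ne_of_gt hSpos)
  -- bounds
  have hbx := quadBounds (fun j => (v j).re)
  have hby := quadBounds (fun j => (v j).im)
  have hQxv : (∑ j : Fin n, ∑ k : Fin n, (v j).re * M j k * (v k).re) = -μ.re * Sx := by
    rw [hQx, hμim]; ring
  have hQyv : (∑ j : Fin n, ∑ k : Fin n, (v j).im * M j k * (v k).im) = -μ.re * Sy := by
    rw [hQy, hμim]; ring
  rw [hQxv] at hbx
  rw [hQyv] at hby
  have hc : (0:ℝ) < 30 * (n:ℝ)^4 := by
    have : (1:ℝ) ≤ (n:ℝ) := by exact_mod_cast hn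
    positivity
  refine ⟨hμim, ?_, ?_⟩
  · -- -1 ≤ μ.re
    nlinarith [hbx.1, hby.1, hSpos]
  · -- μ.re ≤ -1/(30 n^4)
    rw [le_div_iff₀ hc]
    nlinarith [hbx.2, hby.2, hSpos]
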